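/- Let n and d be positive integers with d ≤ n. Then P[n,d−1] ≤ max{ Σ_{j=0}^{i} L_{i,j} : i = ⌊(d−1)/2⌋, ⌊(d−1)/2⌋+1, …, d−1 }. -/

import Mathlib

open Finset

/-- Hamming distance between two permutations of `{0,…,n-1}`. -/
def permDist {n : ℕ} (x y : Equiv.Perm (Fin n)) : ℕ :=
  (Finset.univ.filter fun i => x i ≠ y i).card

/-- Weight of a permutation: number of non-fixed points. -/
def permWt {n : ℕ} (x : Equiv.Perm (Fin n)) : ℕ :=
  (Finset.univ.filter fun i => x i ≠ i).card

/-- `C` is an `(n,d)` permutation array. -/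
def IsPA (n d : ℕ) (C : Finset (Equiv.Perm (Fin n))) : Prop :=
  ∀ x ∈ C, ∀ y ∈ C, x ≠ y → d ≤ permDist x y

/-- `P(n,d)`: the maximum size of an `(n,d)` permutation array. -/
noncomputable def Pmax (n d : ℕ) : ℕ :=
  sSup {m | ∃ C : Finset (Equiv.Perm (Fin n)), IsPA n d C ∧ C.card = m}

/-- `P[n,e]`: the maximum size of a subset of `S_n` with pairwise distances at most `e`. -/
noncomputable def PmaxLe (n e : ℕ) : ℕ :=
  sSup {m | ∃ Γ : Finset (Equiv.Perm (Fin n)),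
    (∀ x ∈ Γ, ∀ y ∈ Γ, x ≠ y → permDist x y ≤ e) ∧ Γ.card = m}

/-- `V(n,r) = Σ_{i=0}^{r} C(n,i)·D_i`. -/
def V (n r : ℕ) : ℕ := ∑ i ∈ Finset.range (r + 1), Nat.choose n i * numDerangements i

/-- `V₂(n,r) = Σ_{i=0}^{r} C(n,i)`. -/
def V2 (n r : ℕ) : ℕ := ∑ i ∈ Finset.range (r + 1), Nat.choose n i

/-- `L_{i,j}` (depending also on `n` and `d`). -/
def L (n d i j : ℕ) : ℕ :=
  ∑ k ∈ Finset.Icc ((i + j + 1 - d + 1) / 2) (min i j),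
    ∑ l ∈ Finset.range (min (d + 2 * k - i - j - 1) k + 1),
      Nat.choose i k * Nat.choose (n - i) (j - k) * Nat.choose k l *
        Nat.factorial (l + j - k)

/-- `T`: number of unordered pairs of distinct permutations in `S_n`, each of weight
between `1` and `d-1`, with Hamming distance at most `d-1`. -/
def Tperm (n d : ℕ) : ℕ :=
  ((Finset.univ : Finset (Equiv.Perm (Fin n) × Equiv.Perm (Fin n))).filter
    (fun p => p.1 ≠ p.2 ∧ 1 ≤ permWt p.1 ∧ permWt p.1 ≤ d - 1 ∧
      1 ≤ permWt p.2 ∧ permWt p.2 ≤ d - 1 ∧ permDist p.1 p.2 ≤ d - 1)).card / 2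

/-- Hamming weight of a binary vector. -/
def binWt {n : ℕ} (u : Fin n → Bool) : ℕ := (Finset.univ.filter fun i => u i ≠ false).card

/-- Hamming distance between binary vectors. -/
def binDist {n : ℕ} (u v : Fin n → Bool) : ℕ := (Finset.univ.filter fun i => u i ≠ v i).card

/-- `T′`: number of unordered pairs of distinct nonzero binary vectors of length `n`,
each of Hamming weight at most `d-1`, with Hamming distance at most `d-1`. -/
def Tbin (n d : ℕ) : ℕ :=
  ((Finset.univ : Finset ((Fin n → Bool) × (Fin n → Bool))).filter
    (fun p => p.1 ≠ p.2 ∧ p.1 ≠ (fun _ => false) ∧ p.2 ≠ (fun _ => false) ∧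
      binWt p.1 ≤ d - 1 ∧ binWt p.2 ≤ d - 1 ∧ binDist p.1 p.2 ≤ d - 1)).card / 2

-- basic lemmas
lemma permDist_mul_right {n : ℕ} (a b c : Equiv.Perm (Fin n)) :
    permDist (a * c) (b * c) = permDist a b := by
  unfold permDist
  apply Finset.card_bij' (fun p _ => c p) (fun p _ => c⁻¹ p)
  · intro p hp
    simp only [mem_filter, mem_univ, true_and, Equiv.Perm.mul_apply] at hp ⊢
    simpa using (Finset.mem_filter.mp hp).2
  · intro p hp
    simp only [mem_filter, mem_univ, true_and, Equiv.Perm.mul_apply] at hp ⊢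
    exact Finset.mem_filter.mpr ⟨mem_univ _, by simpa using hp⟩
  · intro p _; simp
  · intro p _; simp

lemma permWt_eq_dist_one {n : ℕ} (y : Equiv.Perm (Fin n)) :
    permWt y = permDist y 1 := by
  rfl

lemma permDist_self {n : ℕ} (x : Equiv.Perm (Fin n)) : permDist x x = 0 := by
  simp [permDist]

lemma permDist_le_wt_add_wt {n : ℕ} (x y : Equiv.Perm (Fin n)) :
    permDist x y ≤ permWt x + permWt y := by
  unfold permDist permWt
  refine le_trans (Finset.card_le_card ?_) (Finset.card_union_le _ _)
  intro p hp
  simp only [mem_filter, mem_univ, true_and, mem_union] at hp ⊢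
  by_contra h
  push_neg at h
  exact hp (h.1.trans h.2.symm)

lemma permWt_eq_zero {n : ℕ} (y : Equiv.Perm (Fin n)) (h : permWt y = 0) : y = 1 := by
  unfold permWt at h
  rw [Finset.card_eq_zero, Finset.filter_eq_empty_iff] at h
  ext p
  have := h (Finset.mem_univ p); simp only [ne_eq, not_not] at this; simp [this]

abbrev KeyT (n : ℕ) := Σ _ : ℕ, Σ _ : ℕ, Σ _ : Finset (Fin n), Finset (Fin n) × Finset (Fin n)

lemma ball_le (n d i j : ℕ) (hd : 0 < d) (x : Equiv.Perm (Fin n)) (hx : permWt x = i) :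
    ((Finset.univ : Finset (Equiv.Perm (Fin n))).filter
      fun y => permWt y = j ∧ permDist x y ≤ d - 1).card ≤ L n d i j := by
  classical
  set M : Finset (Fin n) := Finset.univ.filter (fun p => x p ≠ p) with hMdef
  have hMcard : M.card = i := hx
  set Ball := (Finset.univ : Finset (Equiv.Perm (Fin n))).filter
      (fun y => permWt y = j ∧ permDist x y ≤ d - 1) with hBall
  set mv : Equiv.Perm (Fin n) → Finset (Fin n) :=
    fun y => Finset.univ.filter (fun p => y p ≠ p) with hmv
  set key : Equiv.Perm (Fin n) → KeyT n := fun y =>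
    ⟨(mv y ∩ M).card, (mv y ∩ M).card - ((mv y ∩ M).filter (fun p => y p = x p)).card,
      mv y ∩ M, (mv y \ M, (mv y ∩ M).filter (fun p => y p = x p))⟩ with hkey
  set S : Finset (KeyT n) :=
    (Finset.Icc ((i + j + 1 - d + 1) / 2) (min i j)).sigma fun k =>
      (Finset.range (min (d + 2 * k - i - j - 1) k + 1)).sigma fun l =>
        (M.powersetCard k).sigma fun K =>
          ((Finset.univ \ M).powersetCard (j - k)) ×ˢ (K.powersetCard (k - l)) with hS
  -- invariance of moved set
  have hinv : ∀ (y : Equiv.Perm (Fin n)) (p : Fin n), p ∈ mv y → y p ∈ mv y := by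
    intro y p hp
    simp only [hmv, mem_filter, mem_univ, true_and] at hp ⊢
    exact y.injective.ne hp
  have hinvx : ∀ p : Fin n, p ∈ M → x p ∈ M := by
    intro p hp
    simp only [hMdef, mem_filter, mem_univ, true_and] at hp ⊢
    exact x.injective.ne hp
  -- Step 1: every ball element has a valid key
  have hmem : ∀ y ∈ Ball, key y ∈ S := by
    intro y hy
    simp only [hBall, mem_filter, mem_univ, true_and] at hy
    obtain ⟨hwt, hdist⟩ := hy
    have hKsub : mv y ∩ M ⊆ M := inter_subset_right
    have hKmv : mv y ∩ M ⊆ mv y := inter_subset_left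
    have hmvcard : (mv y).card = j := hwt
    have hAK : (mv y ∩ M).filter (fun p => y p = x p) ⊆ mv y ∩ M := filter_subset _ _
    have hk_i : (mv y ∩ M).card ≤ i := hMcard ▸ card_le_card hKsub
    have hk_j : (mv y ∩ M).card ≤ j := hmvcard ▸ card_le_card hKmv
    have ha : ((mv y ∩ M).filter (fun p => y p = x p)).card ≤ (mv y ∩ M).card :=
      card_le_card hAK
    have hBcard : (mv y \ M).card + (mv y ∩ M).card = j := by
      rw [← hmvcard]; exact card_sdiff_add_card_inter _ _
    have hMKcard : (M \ mv y).card + (mv y ∩ M).card = i := by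
      rw [← hMcard, inter_comm]; exact card_sdiff_add_card_inter _ _
    have hAfil : ((mv y ∩ M).filter (fun p => ¬ (y p = x p))).card
        = (mv y ∩ M).card - ((mv y ∩ M).filter (fun p => y p = x p)).card := by
      have := Finset.card_filter_add_card_filter_not
        (s := mv y ∩ M) (p := fun p => y p = x p)
      omega
    -- distance lower bound
    have hdist_ge : (M \ mv y).card + ((mv y \ M).card
        + ((mv y ∩ M).filter (fun p => ¬ (y p = x p))).card) ≤ permDist x y := by
      have hsub : (M \ mv y) ∪ ((mv y \ M) ∪ (mv y ∩ M).filter (fun p => ¬ (y p = x p)))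
          ⊆ Finset.univ.filter (fun p => x p ≠ y p) := by
        intro p hp
        simp only [mem_union, mem_sdiff, mem_filter, mem_inter, hmv, hMdef,
          mem_univ, true_and, ne_eq, not_not] at hp ⊢
        rcases hp with ⟨h1, h2⟩ | (⟨h1, h2⟩ | ⟨⟨h1, h2⟩, h3⟩)
        · rw [h2]; exact h1
        · rw [h2]; exact fun hc => h1 hc.symm
        · exact fun hc => h3 hc.symm
      have hd1 : Disjoint (M \ mv y)
          ((mv y \ M) ∪ (mv y ∩ M).filter (fun p => ¬ (y p = x p))) := by
        rw [Finset.disjoint_left]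
        intro p hp hp2
        simp only [mem_sdiff] at hp
        simp only [mem_union, mem_sdiff, mem_filter, mem_inter] at hp2
        rcases hp2 with ⟨h1, _⟩ | ⟨⟨h1, _⟩, _⟩ <;> exact hp.2 h1
      have hd2 : Disjoint (mv y \ M) ((mv y ∩ M).filter (fun p => ¬ (y p = x p))) := by
        rw [Finset.disjoint_left]
        intro p hp hp2
        simp only [mem_sdiff] at hp
        simp only [mem_filter, mem_inter] at hp2
        exact hp.2 hp2.1.2
      calc (M \ mv y).card + ((mv y \ M).card
            + ((mv y ∩ M).filter (fun p => ¬ (y p = x p))).card)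
          = ((M \ mv y) ∪ ((mv y \ M) ∪ (mv y ∩ M).filter (fun p => ¬ (y p = x p)))).card := by
            rw [card_union_of_disjoint hd1, card_union_of_disjoint hd2]
        _ ≤ (Finset.univ.filter (fun p => x p ≠ y p)).card := card_le_card hsub
        _ = permDist x y := rfl
    have hnum := le_trans hdist_ge hdist
    rw [hAfil] at hnum
    simp only [hS, hkey, Finset.mem_sigma, Finset.mem_product]
    refine ⟨?_, ?_, ?_, ?_, ?_⟩
    · rw [Finset.mem_Icc]; omega
    · rw [Finset.mem_range]; omega
    · exact Finset.mem_powersetCard.mpr ⟨hKsub, rfl⟩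
    · refine Finset.mem_powersetCard.mpr ⟨?_, by omega⟩
      intro p hp
      simp only [mem_sdiff] at hp ⊢
      exact ⟨mem_univ _, hp.2⟩
    · exact Finset.mem_powersetCard.mpr ⟨hAK, by omega⟩
  -- Step 2: fiberwise decomposition
  have hcard := Finset.card_eq_sum_card_fiberwise hmem
  rw [hcard]
  -- Step 3: each fiber is small
  have hfib : ∀ s ∈ S, (Ball.filter fun y => key y = s).card
      ≤ Nat.factorial (s.snd.fst + (j - s.fst)) := by
    rintro ⟨k, l, K, B, A⟩ hs
    simp only [hS, Finset.mem_sigma, Finset.mem_Icc, Finset.mem_range,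
      Finset.mem_powersetCard, Finset.mem_product] at hs
    obtain ⟨⟨hlo, hkmin⟩, hlr, ⟨hKM, hKk⟩, ⟨hBM, hBc⟩, hAK, hAc⟩ := hs
    have hlk : l ≤ k := by omega
    have hkj : k ≤ j := by omega
    have hki : k ≤ i := by omega
    rcases Finset.eq_empty_or_nonempty (Ball.filter fun y => key y = ⟨k, l, K, (B, A)⟩)
      with he | ⟨y₀, hy₀⟩
    · rw [he]; simp
    · -- facts about any member of the fiber
      have hyfacts : ∀ y, y ∈ Ball.filter (fun y => key y = ⟨k, l, K, (B, A)⟩) →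
          mv y = K ∪ B ∧ (∀ p ∈ A, y p = x p) ∧
          (∀ p ∈ (K \ A) ∪ B, y p ∈ (K ∪ B) \ A.image x) := by
        intro y hy
        rw [mem_filter] at hy
        obtain ⟨hyB, hkeq⟩ := hy
        simp only [hkey, Sigma.mk.inj_iff, heq_eq_eq, Prod.mk.injEq] at hkeq
        obtain ⟨hk1, hk2, hk3, hk4, hk5⟩ := hkeq
        have hmveq : mv y = K ∪ B := by
          rw [← hk3, ← hk4]
          ext p
          simp only [mem_union, mem_inter, mem_sdiff]
          tauto
        have hA : ∀ p ∈ A, y p = x p := by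
          intro p hp
          rw [← hk5] at hp
          exact (mem_filter.mp hp).2
        refine ⟨hmveq, hA, ?_⟩
        intro p hp
        have hpmv : p ∈ mv y := by
          rw [hmveq, mem_union]
          rcases mem_union.mp hp with h | h
          · exact Or.inl (mem_sdiff.mp h).1
          · exact Or.inr h
        have hymv : y p ∈ mv y := hinv y p hpmv
        rw [mem_sdiff]
        constructor
        · rw [← hmveq]; exact hymv
        · intro hc
          obtain ⟨q, hqA, hqx⟩ := Finset.mem_image.mp hc
          have : y q = y p := by rw [hA q hqA, hqx]
          have hqp : q = p := y.injective this
          rcases mem_union.mp hp with h | h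
          · exact (mem_sdiff.mp h).2 (hqp ▸ hqA)
          · have : p ∈ M := hKM (hAK (hqp ▸ hqA))
            have := hBM h
            rw [mem_sdiff] at this
            exact this.2 ‹p ∈ M›
      -- x maps A into K ∪ B
      have himx : A.image x ⊆ K ∪ B := by
        intro p hp
        obtain ⟨q, hqA, hqx⟩ := Finset.mem_image.mp hp
        obtain ⟨hmveq, hA, _⟩ := hyfacts y₀ hy₀
        have hq : q ∈ mv y₀ := by rw [hmveq]; exact mem_union_left _ (hAK hqA)
        have h2 : y₀ q ∈ mv y₀ := hinv y₀ q hq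
        rw [← hqx, ← hA q hqA, ← hmveq]
        exact h2
      have hdisjKB : Disjoint K B := by
        rw [Finset.disjoint_left]
        intro p hpK hpB
        have := hBM hpB
        rw [mem_sdiff] at this
        exact this.2 (hKM hpK)
      have hRcard : ((K \ A) ∪ B).card = l + (j - k) := by
        rw [card_union_of_disjoint (Finset.disjoint_of_subset_left (sdiff_subset) hdisjKB),
          card_sdiff_of_subset hAK, hKk, hAc, hBc]
        omega
      have hTcard : ((K ∪ B) \ A.image x).card = l + (j - k) := by
        rw [card_sdiff_of_subset himx, card_union_of_disjoint hdisjKB,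
          Finset.card_image_of_injective _ x.injective, hKk, hBc, hAc]
        omega
      set m := l + (j - k) with hm
      set R := (K \ A) ∪ B with hR
      set T := (K ∪ B) \ A.image x with hT
      let eR := R.orderIsoOfFin hRcard
      let eT := T.orderIsoOfFin hTcard
      let g : Equiv.Perm (Fin n) → Fin m → Fin m := fun y q =>
        if h : y (eR q : Fin n) ∈ T then eT.symm ⟨y (eR q), h⟩ else q
      have hg : ∀ y ∈ Ball.filter (fun y => key y = ⟨k, l, K, (B, A)⟩), ∀ q : Fin m,
          ∃ h : y (eR q : Fin n) ∈ T, g y q = eT.symm ⟨y (eR q), h⟩ := by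
        intro y hy q
        have hmaps := (hyfacts y hy).2.2
        have hq : (eR q : Fin n) ∈ R := (eR q).2
        have : y (eR q : Fin n) ∈ T := hmaps _ hq
        exact ⟨this, dif_pos this⟩
      have hgbij : ∀ y ∈ Ball.filter (fun y => key y = ⟨k, l, K, (B, A)⟩),
          Function.Bijective (g y) := by
        intro y hy
        rw [← Finite.injective_iff_bijective]
        intro q1 q2 hq
        obtain ⟨h1, e1⟩ := hg y hy q1
        obtain ⟨h2, e2⟩ := hg y hy q2
        rw [e1, e2] at hq
        have h3 := congrArg Subtype.val (eT.symm.injective hq)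
        have h4 : (eR q1 : Fin n) = (eR q2 : Fin n) := y.injective h3
        exact eR.injective (Subtype.ext h4)
      let f : Equiv.Perm (Fin n) → Equiv.Perm (Fin m) := fun y =>
        if h : Function.Bijective (g y) then Equiv.ofBijective _ h else 1
      have hinj : Set.InjOn f (Ball.filter (fun y => key y = ⟨k, l, K, (B, A)⟩)) := by
        intro y1 h1 y2 h2 hf
        simp only [Finset.coe_filter, Set.mem_setOf_eq] at h1 h2
        have h1' : y1 ∈ Ball.filter (fun y => key y = ⟨k, l, K, (B, A)⟩) :=
          mem_filter.mpr ⟨h1.1, h1.2⟩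
        have h2' : y2 ∈ Ball.filter (fun y => key y = ⟨k, l, K, (B, A)⟩) :=
          mem_filter.mpr ⟨h2.1, h2.2⟩
        have hb1 := hgbij y1 h1'
        have hb2 := hgbij y2 h2'
        simp only [f, dif_pos hb1, dif_pos hb2] at hf
        have hgeq : ∀ q, g y1 q = g y2 q := by
          intro q
          have := congrArg (fun e => (e : Equiv _ _) q) hf
          simpa [Equiv.ofBijective] using this
        have hyR : ∀ r ∈ R, y1 r = y2 r := by
          intro r hr
          have hq : eR (eR.symm ⟨r, hr⟩) = ⟨r, hr⟩ := eR.apply_symm_apply _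
          obtain ⟨ha1, e1⟩ := hg y1 h1' (eR.symm ⟨r, hr⟩)
          obtain ⟨ha2, e2⟩ := hg y2 h2' (eR.symm ⟨r, hr⟩)
          have h5 := hgeq (eR.symm ⟨r, hr⟩)
          rw [e1, e2] at h5
          have h6 := congrArg Subtype.val (eT.symm.injective h5)
          simpa [hq] using h6
        obtain ⟨hmv1, hA1, _⟩ := hyfacts y1 h1'
        obtain ⟨hmv2, hA2, _⟩ := hyfacts y2 h2'
        ext p
        by_cases hp : p ∈ K ∪ B
        · rcases mem_union.mp hp with hK | hB
          · by_cases hpA : p ∈ A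
            · rw [hA1 p hpA, hA2 p hpA]
            · have : p ∈ R := mem_union_left _ (mem_sdiff.mpr ⟨hK, hpA⟩)
              exact congrArg Fin.val (hyR p this)
          · have : p ∈ R := mem_union_right _ hB
            exact congrArg Fin.val (hyR p this)
        · have hp1 : p ∉ mv y1 := by rw [hmv1]; exact hp
          have hp2 : p ∉ mv y2 := by rw [hmv2]; exact hp
          simp only [hmv, mem_filter, mem_univ, true_and, not_not, ne_eq] at hp1 hp2
          rw [hp1, hp2]
      calc (Ball.filter fun y => key y = ⟨k, l, K, (B, A)⟩).card
          ≤ (Finset.univ : Finset (Equiv.Perm (Fin m))).card :=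
            Finset.card_le_card_of_injOn f (fun _ _ => mem_univ _) hinj
        _ = Nat.factorial m := by
            rw [Finset.card_univ, Fintype.card_perm, Fintype.card_fin]
  -- Step 4: summing the bounds gives L
  have hsum : ∑ s ∈ S, Nat.factorial (s.snd.fst + (j - s.fst)) = L n d i j := by
    simp only [hS, Finset.sum_sigma]
    unfold L
    refine Finset.sum_congr rfl fun k hk => ?_
    refine Finset.sum_congr rfl fun l hl => ?_
    rw [Finset.mem_Icc] at hk
    rw [Finset.mem_range] at hl
    have hkj : k ≤ j := le_trans hk.2 (min_le_right _ _)
    have hlk : l ≤ k := by omega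
    have hstep : ∀ K ∈ M.powersetCard k,
        ∑ _p ∈ ((Finset.univ \ M).powersetCard (j - k)) ×ˢ (K.powersetCard (k - l)),
          Nat.factorial (l + (j - k))
        = Nat.choose (n - i) (j - k) * (Nat.choose k l * Nat.factorial (l + (j - k))) := by
      intro K hK
      rw [Finset.sum_const, Finset.card_product, Finset.card_powersetCard,
        Finset.card_powersetCard, smul_eq_mul]
      have hKc : K.card = k := (Finset.mem_powersetCard.mp hK).2
      have hMc : (Finset.univ \ M).card = n - i := by
        rw [Finset.card_sdiff_of_subset (subset_univ M), Finset.card_univ, Fintype.card_fin, hMcard]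
      rw [hKc, hMc, Nat.choose_symm hlk]
      ring
    rw [Finset.sum_congr rfl hstep, Finset.sum_const, Finset.card_powersetCard,
      hMcard, smul_eq_mul]
    have : l + (j - k) = l + j - k := by omega
    rw [this]
    ring
  calc ∑ s ∈ S, (Ball.filter fun y => key y = s).card
      ≤ ∑ s ∈ S, Nat.factorial (s.snd.fst + (j - s.fst)) := Finset.sum_le_sum hfib
    _ = L n d i j := hsum

lemma main_aux (n d : ℕ) (hd : 0 < d) (x : Equiv.Perm (Fin n)) (i : ℕ) (hx : permWt x = i)
    (Γ : Finset (Equiv.Perm (Fin n)))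
    (hsub : ∀ y ∈ Γ, permWt y ≤ i ∧ permDist x y ≤ d - 1) :
    Γ.card ≤ ∑ j ∈ Finset.range (i + 1), if j = 0 then 1 else L n d i j := by
  classical
  have hΓsub : Γ ⊆ (Finset.range (i + 1)).biUnion (fun j =>
      Finset.univ.filter fun y => permWt y = j ∧ permDist x y ≤ d - 1) := by
    intro y hy
    rw [Finset.mem_biUnion]
    exact ⟨permWt y, Finset.mem_range.mpr (Nat.lt_succ_of_le (hsub y hy).1),
      Finset.mem_filter.mpr ⟨Finset.mem_univ _, rfl, (hsub y hy).2⟩⟩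
  calc Γ.card ≤ _ := Finset.card_le_card hΓsub
    _ ≤ ∑ j ∈ Finset.range (i + 1), (Finset.univ.filter fun y =>
          permWt y = j ∧ permDist x y ≤ d - 1).card := Finset.card_biUnion_le
    _ ≤ _ := by
        refine Finset.sum_le_sum fun j hj => ?_
        by_cases hj0 : j = 0
        · subst hj0
          rw [if_pos rfl]
          refine Finset.card_le_one.mpr fun a ha b hb => ?_
          rw [Finset.mem_filter] at ha hb
          rw [permWt_eq_zero a ha.2.1, permWt_eq_zero b hb.2.1]
        · rw [if_neg hj0]
          exact ball_le n d i j hd x hx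


theorem stmt16 (n d : ℕ) (hn : 0 < n) (hd : 0 < d) (hdn : d ≤ n) :
    PmaxLe n (d - 1) ≤
      (Finset.Icc ((d - 1) / 2) (d - 1)).sup
        (fun i => ∑ j ∈ Finset.range (i + 1), if j = 0 then 1 else L n d i j) := by
  classical
  rw [PmaxLe]
  refine csSup_le ⟨0, ∅, by simp, rfl⟩ ?_
  rintro m ⟨Γ, hΓ, rfl⟩
  rcases Γ.eq_empty_or_nonempty with rfl | ⟨z, hz⟩
  · simp
  set F : ℕ → ℕ := fun i => ∑ j ∈ Finset.range (i + 1), if j = 0 then 1 else L n d i j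
    with hF
  set Γ' := Γ.image (fun g => g * z⁻¹) with hΓ'
  have hcard : Γ'.card = Γ.card :=
    Finset.card_image_of_injective _ (mul_left_injective z⁻¹)
  have hmem1 : (1 : Equiv.Perm (Fin n)) ∈ Γ' := Finset.mem_image.mpr ⟨z, hz, by simp⟩
  have hpair : ∀ a ∈ Γ', ∀ b ∈ Γ', a ≠ b → permDist a b ≤ d - 1 := by
    intro a ha b hb hab
    obtain ⟨a0, ha0, rfl⟩ := Finset.mem_image.mp ha
    obtain ⟨b0, hb0, rfl⟩ := Finset.mem_image.mp hb
    rw [permDist_mul_right]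
    exact hΓ a0 ha0 b0 hb0 (fun h => hab (by rw [h]))
  obtain ⟨x₀, hx₀, hmax⟩ := Finset.exists_max_image Γ' permWt ⟨1, hmem1⟩
  have hwtle : ∀ y ∈ Γ', permWt y ≤ d - 1 := by
    intro y hy
    by_cases h1 : y = 1
    · subst h1
      simp [permWt]
    · rw [permWt_eq_dist_one]
      exact hpair y hy 1 hmem1 h1
  rw [← hcard]
  by_cases h0 : permWt x₀ = 0
  · have hsub1 : Γ' ⊆ {1} := by
      intro y hy
      have hy0 : permWt y = 0 := Nat.le_zero.mp (h0 ▸ hmax y hy)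
      simp [permWt_eq_zero y hy0]
    have h1 : Γ'.card ≤ 1 := by simpa using Finset.card_le_card hsub1
    have h2 : 1 ≤ F ((d - 1) / 2) := by
      rw [hF]
      have := Finset.single_le_sum
        (f := fun j => if j = 0 then 1 else L n d ((d - 1) / 2) j)
        (fun _ _ => Nat.zero_le _) (Finset.mem_range.mpr (Nat.succ_pos ((d - 1) / 2)))
      simpa using this
    exact le_trans h1 (le_trans h2
      (Finset.le_sup (Finset.mem_Icc.mpr ⟨le_refl _, by omega⟩)))
  · by_cases hc : (d - 1) / 2 ≤ permWt x₀
    · have hile : permWt x₀ ≤ d - 1 := hwtle x₀ hx₀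
      have hbound := main_aux n d hd x₀ (permWt x₀) rfl Γ' (fun y hy => by
        refine ⟨hmax y hy, ?_⟩
        by_cases hyx : y = x₀
        · subst hyx; rw [permDist_self]; exact Nat.zero_le _
        · exact hpair x₀ hx₀ y hy (fun h => hyx h.symm))
      exact le_trans hbound (Finset.le_sup (f := F) (Finset.mem_Icc.mpr ⟨hc, hile⟩))
    · set i0 := (d - 1) / 2 with hi0def
      have hi0 : 2 ≤ i0 := by
        have h1 : 1 ≤ permWt x₀ := Nat.one_le_iff_ne_zero.mpr h0
        omega
      have hi0n : i0 ≤ n := by omega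
      obtain ⟨s, hs_sub, hs_card⟩ := Finset.exists_subset_card_eq
        (s := (Finset.univ : Finset (Fin n))) (n := i0)
        (by rw [Finset.card_univ, Fintype.card_fin]; exact hi0n)
      obtain ⟨c, hcyc, hsupp⟩ := Finset.exists_cycleOn s
      have hsupp2 : c.support = s := by
        refine Finset.Subset.antisymm hsupp fun p hp => ?_
        rw [Equiv.Perm.mem_support]
        exact hcyc.apply_ne (Finset.one_lt_card_iff_nontrivial.mp (by omega)) hp
      have hwt : permWt c = i0 := by
        have h1 : permWt c = c.support.card := rfl
        rw [h1, hsupp2, hs_card]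
      have hbound := main_aux n d hd c i0 hwt Γ' (fun y hy => by
        refine ⟨by have := hmax y hy; omega, ?_⟩
        calc permDist c y ≤ permWt c + permWt y := permDist_le_wt_add_wt c y
          _ ≤ d - 1 := by have := hmax y hy; rw [hwt]; omega)
      exact le_trans hbound (Finset.le_sup (f := F) (Finset.mem_Icc.mpr ⟨le_refl _, by omega⟩))
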